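/- Fix an integer n ≥ 2, set b := -n + i, and let D = {0, m} with 2 ≤ m ≤ n². Let (α_j)_{j≥1} be a sequence with α_j ∈ {0, m, -m} for all j, set α := π((α_j)), and assume the radix expansion of α in base (b, {0, ±m}) is unique: for every sequence (β_j)_{j≥1} with β_j ∈ {0, m, -m} for all j and π((β_j)) = α, one has β_j = α_j for all j. Let γ_j := min(D ∩ (D + α_j)) for each j and γ := π((γ_j)). Then (C_{n,D} ∩ (C_{n,D} + α)) − γ = {π((z_j)) : z_j ∈ {0, m} and z_j ≤ m − |α_j| for all j}, and moreover (C_{n,D} ∩ (C_{n,D} + α)) − γ ⊆ C_{n,D}. -/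

import Mathlib

open Complex Filter Pointwise

/-- `piSum b d = ∑_{j≥1} d_j b^{-j}` (0-indexed: `d j` is the `(j+1)`-st digit). -/
noncomputable def piSum (b : ℂ) (d : ℕ → ℤ) : ℂ :=
  ∑' j : ℕ, (d j : ℂ) * b ^ (-((j : ℤ) + 1))

/-- The restricted digit set `C_{n,D}`. -/
def restrictedDigitSet (n : ℕ) (D : Set ℤ) : Set ℂ :=
  {z | ∃ d : ℕ → ℤ, (∀ j, d j ∈ D) ∧ z = piSum (-(n : ℂ) + Complex.I) d}

lemma summable_digits (b : ℂ) (hb : 1 < ‖b‖) (d : ℕ → ℤ) (M : ℝ)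
    (hM : ∀ j, |(d j : ℝ)| ≤ M) :
    Summable (fun j : ℕ => (d j : ℂ) * b ^ (-((j : ℤ) + 1))) := by
  have hb0 : (0:ℝ) < ‖b‖ := lt_trans one_pos hb
  have hr : ‖b‖⁻¹ < 1 := by
    rw [inv_lt_one_iff₀]; right; exact hb
  have hr0 : (0:ℝ) ≤ ‖b‖⁻¹ := by positivity
  have hg : Summable (fun j : ℕ => (M * ‖b‖⁻¹) * (‖b‖⁻¹) ^ j) :=
    (summable_geometric_of_lt_one hr0 hr).mul_left _
  apply Summable.of_norm
  refine Summable.of_nonneg_of_le (fun j => norm_nonneg _) (fun j => ?_) hg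
  have h2 : ‖(d j : ℂ) * b ^ (-((j : ℤ) + 1))‖ = |(d j : ℝ)| * (‖b‖⁻¹) ^ (j+1) := by
    rw [norm_mul]
    congr 1
    · rw [show ((d j : ℤ) : ℂ) = ((d j : ℝ) : ℂ) by push_cast; ring, Complex.norm_real,
        Real.norm_eq_abs]
    · rw [norm_zpow, show (-((j:ℤ)+1)) = -(((j+1:ℕ)):ℤ) by push_cast; ring,
        zpow_neg, zpow_natCast, inv_pow]
  rw [h2, pow_succ]
  have h1 : |(d j : ℝ)| * ((‖b‖⁻¹) ^ j * ‖b‖⁻¹) ≤ M * ((‖b‖⁻¹) ^ j * ‖b‖⁻¹) :=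
    mul_le_mul_of_nonneg_right (hM j) (by positivity)
  linarith [h1]

lemma piSum_add (b : ℂ) (d e : ℕ → ℤ)
    (hd : Summable (fun j : ℕ => (d j : ℂ) * b ^ (-((j : ℤ) + 1))))
    (he : Summable (fun j : ℕ => (e j : ℂ) * b ^ (-((j : ℤ) + 1)))) :
    piSum b (fun j => d j + e j) = piSum b d + piSum b e := by
  unfold piSum
  rw [← Summable.tsum_add hd he]
  congr 1; ext j; push_cast; ring

theorem stmt_15 (n : ℕ) (hn : 2 ≤ n) (m : ℤ) (hm : 2 ≤ m ∧ m ≤ (n : ℤ) ^ 2)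
    (α : ℕ → ℤ) (hα : ∀ j, α j ∈ ({0, m, -m} : Set ℤ))
    (huniq : ∀ β : ℕ → ℤ, (∀ j, β j ∈ ({0, m, -m} : Set ℤ)) →
      piSum (-(n : ℂ) + Complex.I) β = piSum (-(n : ℂ) + Complex.I) α →
      ∀ j, β j = α j)
    (γ : ℕ → ℤ)
    (hγ : ∀ j, IsLeast (({0, m} : Set ℤ) ∩ (({0, m} : Set ℤ) + {α j})) (γ j)) :
    (restrictedDigitSet n {0, m} ∩
        (restrictedDigitSet n {0, m} + {piSum (-(n : ℂ) + Complex.I) α})) -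
        {piSum (-(n : ℂ) + Complex.I) γ} =
      {z | ∃ zs : ℕ → ℤ, (∀ j, (zs j = 0 ∨ zs j = m) ∧ zs j ≤ m - |α j|) ∧
        z = piSum (-(n : ℂ) + Complex.I) zs} ∧
    (restrictedDigitSet n {0, m} ∩
        (restrictedDigitSet n {0, m} + {piSum (-(n : ℂ) + Complex.I) α})) -
        {piSum (-(n : ℂ) + Complex.I) γ} ⊆
      restrictedDigitSet n {0, m} := by
  obtain ⟨hm2, hmn⟩ := hm
  set b : ℂ := -(n : ℂ) + Complex.I with hbdef
  -- |b| > 1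
  have hb : 1 < ‖b‖ := by
    have h1 : |b.re| ≤ ‖b‖ := Complex.abs_re_le_norm b
    have h2 : b.re = -(n:ℝ) := by simp [hbdef]
    have h3 : (2:ℝ) ≤ (n:ℝ) := by exact_mod_cast hn
    rw [h2, abs_neg, _root_.abs_of_nonneg (by linarith : (0:ℝ) ≤ (n:ℝ))] at h1
    linarith
  -- summability helper
  have hsum : ∀ f : ℕ → ℤ, (∀ j, |f j| ≤ m) →
      Summable (fun j : ℕ => (f j : ℂ) * b ^ (-((j : ℤ) + 1))) := by
    intro f hf
    refine summable_digits b hb f (m : ℝ) (fun j => ?_)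
    rw [← Int.cast_abs]
    exact_mod_cast hf j
  -- the key structure of γ
  have key : ∀ j, (α j = 0 ∧ γ j = 0) ∨ (α j = m ∧ γ j = m) ∨ (α j = -m ∧ γ j = 0) := by
    intro j
    obtain ⟨hmem, hlb⟩ := hγ j
    obtain ⟨hγ1, hγ2⟩ := hmem
    rw [Set.mem_add] at hγ2
    obtain ⟨x, hx, y, hy, hxy⟩ := hγ2
    rw [Set.mem_singleton_iff] at hy
    simp only [Set.mem_insert_iff, Set.mem_singleton_iff] at hγ1 hx
    have hαj := hα j
    simp only [Set.mem_insert_iff, Set.mem_singleton_iff] at hαj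
    rcases hαj with h0 | h1 | h2
    · have hle : γ j ≤ 0 := hlb ⟨Set.mem_insert _ _,
        Set.mem_add.mpr ⟨0, Set.mem_insert _ _, α j, rfl, by omega⟩⟩
      left; omega
    · right; left; omega
    · right; right; omega
  -- abs values of α
  have habs : ∀ j, (α j = 0 ∧ |α j| = 0) ∨ (α j = m ∧ |α j| = m) ∨
      (α j = -m ∧ |α j| = m) := by
    intro j
    rcases key j with ⟨ha, _⟩ | ⟨ha, _⟩ | ⟨ha, _⟩
    · left; rw [ha]; exact ⟨rfl, abs_zero⟩
    · right; left; rw [ha]; exact ⟨rfl, _root_.abs_of_nonneg (by omega)⟩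
    · right; right; rw [ha]; exact ⟨rfl, by rw [abs_neg, _root_.abs_of_nonneg (by omega)]⟩
  have hγB : ∀ j, |γ j| ≤ m := by
    intro j; rcases key j with ⟨_, h⟩ | ⟨_, h⟩ | ⟨_, h⟩ <;> rw [h, _root_.abs_le] <;> omega
  have hαB : ∀ j, |α j| ≤ m := by
    intro j
    rcases habs j with ⟨_, h⟩ | ⟨_, h⟩ | ⟨_, h⟩ <;> rw [h] <;> omega
  -- the set equality
  have heq : (restrictedDigitSet n {0, m} ∩
        (restrictedDigitSet n {0, m} + {piSum b α})) - {piSum b γ} =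
      {z | ∃ zs : ℕ → ℤ, (∀ j, (zs j = 0 ∨ zs j = m) ∧ zs j ≤ m - |α j|) ∧
        z = piSum b zs} := by
    ext x
    constructor
    · intro hx
      rw [Set.mem_sub] at hx
      obtain ⟨y, hy, c, hc, hyc⟩ := hx
      rw [Set.mem_singleton_iff] at hc
      subst hc
      obtain ⟨⟨d, hdD, rfl⟩, hy2⟩ := hy
      rw [Set.mem_add] at hy2
      obtain ⟨w, ⟨e, heD, rfl⟩, v, hv, hwv⟩ := hy2
      rw [Set.mem_singleton_iff] at hv
      subst hv
      rw [← hbdef] at hwv hyc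
      have hdD' : ∀ j, d j = 0 ∨ d j = m := by
        intro j; have h := hdD j
        simpa only [Set.mem_insert_iff, Set.mem_singleton_iff] using h
      have heD' : ∀ j, e j = 0 ∨ e j = m := by
        intro j; have h := heD j
        simpa only [Set.mem_insert_iff, Set.mem_singleton_iff] using h
      have hdB : ∀ j, |d j| ≤ m := by
        intro j; have h := hdD' j; rw [_root_.abs_le]; omega
      have heB : ∀ j, |e j| ≤ m := by
        intro j; have h := heD' j; rw [_root_.abs_le]; omega
      set β : ℕ → ℤ := fun j => d j - e j with hβdef
      have hβB : ∀ j, |β j| ≤ m := by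
        intro j; have h1 := hdD' j; have h2 := heD' j
        simp only [hβdef]; rw [_root_.abs_le]; omega
      have hβD : ∀ j, β j ∈ ({0, m, -m} : Set ℤ) := by
        intro j; have h1 := hdD' j; have h2 := heD' j
        simp only [Set.mem_insert_iff, Set.mem_singleton_iff, hβdef]; omega
      have hadd : piSum b d = piSum b β + piSum b e := by
        rw [← piSum_add b β e (hsum β hβB) (hsum e heB)]
        congr 1; funext j; simp [hβdef]
      have hβα : piSum b β = piSum b α := by
        linear_combination -hadd - hwv
      have hβeq : ∀ j, d j - e j = α j := by
        intro j
        have := huniq β hβD hβα j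
        simpa only [hβdef] using this
      set zs : ℕ → ℤ := fun j => d j - γ j with hzsdef
      have hzsp : ∀ j, (zs j = 0 ∨ zs j = m) ∧ zs j ≤ m - |α j| := by
        intro j
        have h1 := hdD' j; have h2 := heD' j; have h3 := hβeq j
        rcases key j with ⟨ha, hg⟩ | ⟨ha, hg⟩ | ⟨ha, hg⟩ <;>
          rcases habs j with ⟨ha', hb'⟩ | ⟨ha', hb'⟩ | ⟨ha', hb'⟩ <;>
          exact ⟨by simp only [hzsdef]; omega,
            by simp only [hzsdef]; rw [hb']; omega⟩
      have hzsB : ∀ j, |zs j| ≤ m := by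
        intro j; have h := (hzsp j).1; rw [_root_.abs_le]; omega
      refine ⟨zs, hzsp, ?_⟩
      have hdz : piSum b d = piSum b zs + piSum b γ := by
        rw [← piSum_add b zs γ (hsum zs hzsB) (hsum γ hγB)]
        congr 1; funext j; simp [hzsdef]
      rw [← hyc, hdz]; ring
    · rintro ⟨zs, hzsp, rfl⟩
      have hzsB : ∀ j, |zs j| ≤ m := by
        intro j; have h := (hzsp j).1; rw [_root_.abs_le]; omega
      have hzs0 : ∀ j, α j ≠ 0 → zs j = 0 := by
        intro j hne
        have h1 := (hzsp j).1
        have h2 := (hzsp j).2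
        rcases habs j with ⟨ha, _⟩ | ⟨_, hb'⟩ | ⟨_, hb'⟩
        · exact absurd ha hne
        all_goals rw [hb'] at h2; omega
      set d : ℕ → ℤ := fun j => zs j + γ j with hddef
      set e : ℕ → ℤ := fun j => zs j + γ j - α j with hedef
      have hdD : ∀ j, d j ∈ ({0, m} : Set ℤ) := by
        intro j
        have h1 := (hzsp j).1
        simp only [Set.mem_insert_iff, Set.mem_singleton_iff, hddef]
        rcases key j with ⟨ha, hg⟩ | ⟨ha, hg⟩ | ⟨ha, hg⟩
        · omega
        · have := hzs0 j (by omega); omega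
        · have := hzs0 j (by omega); omega
      have heD : ∀ j, e j ∈ ({0, m} : Set ℤ) := by
        intro j
        have h1 := (hzsp j).1
        simp only [Set.mem_insert_iff, Set.mem_singleton_iff, hedef]
        rcases key j with ⟨ha, hg⟩ | ⟨ha, hg⟩ | ⟨ha, hg⟩
        · omega
        · have := hzs0 j (by omega); omega
        · have := hzs0 j (by omega); omega
      have hdB : ∀ j, |d j| ≤ m := by
        intro j; have h := hdD j
        simp only [Set.mem_insert_iff, Set.mem_singleton_iff] at h
        rw [_root_.abs_le]; omega
      have heB : ∀ j, |e j| ≤ m := by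
        intro j; have h := heD j
        simp only [Set.mem_insert_iff, Set.mem_singleton_iff] at h
        rw [_root_.abs_le]; omega
      have hde : piSum b d = piSum b e + piSum b α := by
        rw [← piSum_add b e α (hsum e heB) (hsum α hαB)]
        congr 1; funext j; simp [hddef, hedef]
      have hdz : piSum b d = piSum b zs + piSum b γ := by
        rw [← piSum_add b zs γ (hsum zs hzsB) (hsum γ hγB)]
      rw [Set.mem_sub]
      refine ⟨piSum b d, ⟨⟨d, hdD, rfl⟩, ?_⟩, piSum b γ, rfl, by rw [hdz]; ring⟩
      rw [Set.mem_add]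
      exact ⟨piSum b e, ⟨e, heD, rfl⟩, piSum b α, rfl, hde.symm⟩
  refine ⟨heq, ?_⟩
  intro x hx
  rw [heq] at hx
  obtain ⟨zs, hzsp, rfl⟩ := hx
  refine ⟨zs, fun j => ?_, rfl⟩
  rcases (hzsp j).1 with h | h
  · rw [h]; exact Set.mem_insert _ _
  · rw [h]; exact Set.mem_insert_of_mem _ rfl
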